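/- Let h be the Poisson integral in the unit disc of a bounded measurable boundary function φ on the unit circle. If e^{iθ₀} is a point such that the one-sided limits φ(θ₀⁻) = A and φ(θ₀⁺) = B exist, then the radial limit lim_{r→1} h(r e^{iθ₀}) = (A + B)/2. -/

import Mathlib

open Filter Set Real MeasureTheory intervalIntegral

/-- The Poisson kernel for the unit disc. -/
noncomputable def poissonKernelDisc (r θ : ℝ) : ℝ :=
  (1 - r ^ 2) / (1 - 2 * r * Real.cos θ + r ^ 2)

/-- The Poisson integral of a `2π`-periodic boundary function `φ`. -/
noncomputable def poissonIntegral (φ : ℝ → ℝ) (r θ : ℝ) : ℝ :=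
  (1 / (2 * Real.pi)) * ∫ t in (0 : ℝ)..(2 * Real.pi), poissonKernelDisc r (θ - t) * φ t

set_option linter.unnecessarySimpa false
set_option linter.unusedTactic false
set_option linter.deprecated false



lemma denom_pos {r : ℝ} (hr0 : 0 ≤ r) (hr1 : r < 1) (t : ℝ) :
    0 < 1 - 2 * r * Real.cos t + r ^ 2 := by
  nlinarith [Real.cos_le_one t, mul_nonneg hr0 (sub_nonneg.2 (Real.cos_le_one t)),
    mul_pos (sub_pos.2 hr1) (sub_pos.2 hr1)]

lemma kernel_nonneg {r : ℝ} (hr0 : 0 ≤ r) (hr1 : r < 1) (t : ℝ) :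
    0 ≤ poissonKernelDisc r t :=
  div_nonneg (by nlinarith) (denom_pos hr0 hr1 t).le

lemma kernel_cont {r : ℝ} (hr0 : 0 ≤ r) (hr1 : r < 1) :
    Continuous (poissonKernelDisc r) := by
  apply continuous_const.div (by continuity)
  exact fun t => (denom_pos hr0 hr1 t).ne'

lemma kernel_periodic (r : ℝ) : Function.Periodic (poissonKernelDisc r) (2 * π) := by
  intro t; simp [poissonKernelDisc, Real.cos_add_two_pi]

lemma kernel_even (r t : ℝ) : poissonKernelDisc r (-t) = poissonKernelDisc r t := by
  simp [poissonKernelDisc]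

lemma poisson_int {r : ℝ} (hr0 : 0 ≤ r) (hr1 : r < 1) :
    ∫ t in (0:ℝ)..(2*π), poissonKernelDisc r t = 2*π := by
  have hne : ∀ θ : ℝ, Complex.exp (θ * Complex.I) - (r:ℂ) ≠ 0 := by
    intro θ h
    have h1 : ‖Complex.exp (θ * Complex.I)‖ = 1 := by
      simpa using Complex.norm_exp_ofReal_mul_I θ
    have : Complex.exp (θ * Complex.I) = (r:ℂ) := sub_eq_zero.1 h
    rw [this] at h1
    simp [abs_of_nonneg hr0] at h1
    linarith
  have key : (∮ z in C((0:ℂ), 1), (z - (r:ℂ))⁻¹) = 2 * π * Complex.I :=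
    circleIntegral.integral_sub_inv_of_mem_ball (by
      simpa [abs_of_nonneg hr0] using hr1)
  have hcont : Continuous fun θ : ℝ =>
      Complex.exp (θ * Complex.I) * (Complex.exp (θ * Complex.I) - (r:ℂ))⁻¹ := by
    apply Continuous.mul (by continuity)
    exact ((Continuous.sub (by continuity) continuous_const).inv₀ hne)
  have key2 : (∫ θ in (0:ℝ)..(2*π),
      Complex.exp (θ * Complex.I) * (Complex.exp (θ * Complex.I) - (r:ℂ))⁻¹) = 2 * π := by
    have : (∫ θ in (0:ℝ)..(2*π), Complex.I *
        (Complex.exp (θ * Complex.I) * (Complex.exp (θ * Complex.I) - (r:ℂ))⁻¹)) =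
        2 * π * Complex.I := by
      rw [← key]
      simp only [circleIntegral, deriv_circleMap, circleMap_zero]
      congr 1; ext θ; simp; ring
    rw [intervalIntegral.integral_const_mul] at this
    have hI : (Complex.I : ℂ) ≠ 0 := Complex.I_ne_zero
    have h2 : Complex.I * (∫ θ in (0:ℝ)..(2*π),
        Complex.exp (θ * Complex.I) * (Complex.exp (θ * Complex.I) - (r:ℂ))⁻¹) =
        Complex.I * (2 * (π:ℂ)) := by rw [this]; ring
    exact mul_left_cancel₀ hI h2
  set f : ℝ → ℂ := fun θ =>
    2 * (Complex.exp (θ * Complex.I) * (Complex.exp (θ * Complex.I) - (r:ℂ))⁻¹) - 1 with hf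
  have hint : IntervalIntegrable f volume 0 (2*π) :=
    ((continuous_const.mul hcont).sub continuous_const).intervalIntegrable _ _
  have hre : ∀ θ : ℝ, poissonKernelDisc r θ = (f θ).re := by
    intro θ
    have hD := denom_pos hr0 hr1 θ
    have hs := Real.sin_sq_add_cos_sq θ
    simp only [hf, poissonKernelDisc, ← div_eq_mul_inv, Complex.sub_re, Complex.mul_re,
      Complex.div_re, Complex.sub_im, Complex.normSq_apply, Complex.exp_ofReal_mul_I_re,
      Complex.exp_ofReal_mul_I_im, Complex.ofReal_re, Complex.ofReal_im, Complex.one_re,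
      Complex.re_ofNat, Complex.im_ofNat, sub_zero]
    have hN : (Real.cos θ - r) * (Real.cos θ - r) + Real.sin θ * Real.sin θ
        = 1 - 2 * r * Real.cos θ + r ^ 2 := by nlinarith
    rw [hN]
    rw [zero_mul, sub_zero, eq_sub_iff_add_eq, div_add_one hD.ne']
    rw [← add_div, ← mul_div_assoc]
    congr 1
    linear_combination (-2) * hs
  have hintf : (∫ θ in (0:ℝ)..(2*π), f θ) = 2 * π := by
    rw [hf]
    beta_reduce
    rw [intervalIntegral.integral_sub (by exact (continuous_const.mul hcont).intervalIntegrable _ _)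
      (continuous_const.intervalIntegrable _ _)]
    rw [intervalIntegral.integral_const_mul, key2, intervalIntegral.integral_const]
    simp [Complex.real_smul]
    push_cast
    ring
  calc ∫ t in (0:ℝ)..(2*π), poissonKernelDisc r t
      = ∫ t in (0:ℝ)..(2*π), Complex.reCLM (f t) := by simp_rw [hre]; rfl
    _ = Complex.reCLM (∫ t in (0:ℝ)..(2*π), f t) :=
        Complex.reCLM.intervalIntegral_comp_comm hint
    _ = 2 * π := by rw [hintf]; simp

lemma intervalIntegrable_bdd {f : ℝ → ℝ} (hf : Measurable f) {M : ℝ}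
    (hM : ∀ t, |f t| ≤ M) (a b : ℝ) : IntervalIntegrable f volume a b := by
  rw [intervalIntegrable_iff]
  exact MeasureTheory.Integrable.mono' (integrableOn_const measure_Ioc_lt_top.ne)
    hf.aestronglyMeasurable (ae_of_all _ fun t => by simpa using hM t)

lemma kernel_le {r c t : ℝ} (hr0 : 0 ≤ r) (hr1 : r < 1) (hc1 : c ≤ 1) (hc : Real.cos t ≤ c) :
    poissonKernelDisc r t ≤ (1 - r ^ 2) / (1 - 2 * r * c + r ^ 2) := by
  have hd0 : 0 < 1 - 2 * r * c + r ^ 2 := by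
    nlinarith [mul_pos (sub_pos.2 hr1) (sub_pos.2 hr1), mul_nonneg hr0 (sub_nonneg.2 hc1)]
  have hD := denom_pos hr0 hr1 t
  rw [poissonKernelDisc, div_le_div_iff₀ hD hd0]
  nlinarith [mul_nonneg (mul_nonneg (sub_nonneg.2 (by nlinarith : r ^ 2 ≤ 1)) hr0)
    (sub_nonneg.2 hc)]

lemma kernel_bdd {r : ℝ} (hr0 : 0 ≤ r) (hr1 : r < 1) (t : ℝ) :
    |poissonKernelDisc r t| ≤ (1 - r ^ 2) / (1 - 2 * r * 1 + r ^ 2) := by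
  rw [abs_of_nonneg (kernel_nonneg hr0 hr1 t)]
  exact kernel_le hr0 hr1 le_rfl (Real.cos_le_one t)

lemma int_halfpi {r : ℝ} (hr0 : 0 ≤ r) (hr1 : r < 1) :
    ∫ t in (0:ℝ)..π, poissonKernelDisc r t = π := by
  have hint : ∀ a b : ℝ, IntervalIntegrable (poissonKernelDisc r) volume a b :=
    fun a b => ((kernel_cont hr0 hr1)).intervalIntegrable a b
  have h2 : ∫ t in (-π)..π, poissonKernelDisc r t = 2 * π := by
    have h := (kernel_periodic r).intervalIntegral_add_eq (-π) 0
    rw [show -π + 2*π = π by ring, zero_add] at h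
    rw [h, poisson_int hr0 hr1]
  have hneg : ∫ t in (-π)..(0:ℝ), poissonKernelDisc r t = ∫ t in (0:ℝ)..π, poissonKernelDisc r t := by
    have h := intervalIntegral.integral_comp_neg (a := 0) (b := π) (poissonKernelDisc r)
    simp only [neg_zero] at h
    rw [← h]
    simp_rw [kernel_even]
  have hsplit := intervalIntegral.integral_add_adjacent_intervals
    (hint (-π) 0) (hint 0 π)
  rw [h2, hneg] at hsplit
  linarith

lemma integrable_kernel_mul {r : ℝ} (hr0 : 0 ≤ r) (hr1 : r < 1) {g : ℝ → ℝ}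
    (hg : Measurable g) {C : ℝ} (hC : ∀ t, |g t| ≤ C) (a b : ℝ) :
    IntervalIntegrable (fun s => poissonKernelDisc r s * g s) volume a b := by
  refine intervalIntegrable_bdd ((kernel_cont hr0 hr1).measurable.mul hg)
    (M := (1 - r ^ 2) / (1 - 2 * r * 1 + r ^ 2) * C) (fun t => ?_) a b
  rw [Pi.mul_apply, abs_mul]
  exact mul_le_mul (kernel_bdd hr0 hr1 t) (hC t) (abs_nonneg _)
    (le_trans (abs_nonneg _) (kernel_bdd hr0 hr1 0))

/-- Rewriting the Poisson integral symmetrically around `θ₀`. -/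
lemma poissonIntegral_eq (φ : ℝ → ℝ) (C : ℝ)
    (hper : ∀ t : ℝ, φ (t + 2 * π) = φ t) (hbdd : ∀ t : ℝ, |φ t| ≤ C)
    (hmeas : Measurable φ) (θ₀ : ℝ) {r : ℝ} (hr0 : 0 ≤ r) (hr1 : r < 1) :
    poissonIntegral φ r θ₀ = (1 / (2 * π)) *
      ((∫ s in (0:ℝ)..π, poissonKernelDisc r s * φ (θ₀ - s)) +
       (∫ s in (0:ℝ)..π, poissonKernelDisc r s * φ (θ₀ + s))) := by
  have hm1 : Measurable fun s : ℝ => φ (θ₀ - s) :=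
    hmeas.comp (measurable_const.sub measurable_id)
  have hm2 : Measurable fun s : ℝ => φ (θ₀ + s) :=
    hmeas.comp (measurable_const.add measurable_id)
  have hint1 := integrable_kernel_mul hr0 hr1 hm1 (fun t => hbdd _)
  have hint2 := integrable_kernel_mul hr0 hr1 hm2 (fun t => hbdd _)
  have hGper : Function.Periodic (fun s => poissonKernelDisc r s * φ (θ₀ - s)) (2 * π) := by
    intro s
    have h := hper (θ₀ - s - 2 * π)
    rw [show θ₀ - s - 2 * π + 2 * π = θ₀ - s by ring] at h
    simp only [show θ₀ - (s + 2 * π) = θ₀ - s - 2 * π by ring, h, kernel_periodic r s]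
  have step1 : (∫ t in (0:ℝ)..(2*π), poissonKernelDisc r (θ₀ - t) * φ t) =
      ∫ s in (θ₀ - 2*π)..(θ₀ - 0), poissonKernelDisc r s * φ (θ₀ - s) := by
    rw [← intervalIntegral.integral_comp_sub_left
      (fun s => poissonKernelDisc r s * φ (θ₀ - s)) θ₀]
    congr 1
    ext t
    rw [sub_sub_cancel]
  have step2 : (∫ s in (θ₀ - 2*π)..(θ₀ - 0), poissonKernelDisc r s * φ (θ₀ - s)) =
      ∫ s in (-π)..π, poissonKernelDisc r s * φ (θ₀ - s) := by
    have h := hGper.intervalIntegral_add_eq (θ₀ - 2*π) (-π)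
    rw [show θ₀ - 2*π + 2*π = θ₀ - 0 by ring, show -π + 2*π = π by ring] at h
    exact h
  have step3 : (∫ s in (-π)..(0:ℝ), poissonKernelDisc r s * φ (θ₀ - s)) =
      ∫ s in (0:ℝ)..π, poissonKernelDisc r s * φ (θ₀ + s) := by
    have h := intervalIntegral.integral_comp_neg (a := 0) (b := π)
      (fun s => poissonKernelDisc r s * φ (θ₀ - s))
    simp only [neg_zero] at h
    rw [← h]
    congr 1
    ext s
    rw [kernel_even, sub_neg_eq_add]
  have hsplit := intervalIntegral.integral_add_adjacent_intervals
    (hint1 (-π) 0) (hint1 0 π)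
  rw [poissonIntegral, step1, step2, ← hsplit, step3]
  ring

/-- Core estimate for one side. -/
lemma core_estimate {r ε' K δ₂ : ℝ} (hr0 : 0 ≤ r) (hr1 : r < 1)
    {ψ : ℝ → ℝ} (hψm : Measurable ψ) (hK : ∀ s, |ψ s| ≤ K)
    (hδ₂0 : 0 < δ₂) (hδ₂π : δ₂ ≤ π)
    (hsmall : ∀ s, 0 < s → s ≤ δ₂ → |ψ s| ≤ ε') :
    |∫ s in (0:ℝ)..π, poissonKernelDisc r s * ψ s| ≤
      ε' * π + K * ((1 - r ^ 2) / (1 - 2 * r * Real.cos δ₂ + r ^ 2)) * π := by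
  set M := (1 - r ^ 2) / (1 - 2 * r * Real.cos δ₂ + r ^ 2) with hM
  have hK0 : 0 ≤ K := le_trans (abs_nonneg _) (hK 0)
  have hε'0 : 0 ≤ ε' := le_trans (abs_nonneg _) (hsmall δ₂ hδ₂0 le_rfl)
  have hM0 : 0 ≤ M := by
    rw [hM]
    apply div_nonneg (by nlinarith)
    exact (denom_pos hr0 hr1 δ₂).le
  have hPint : ∀ a b : ℝ, IntervalIntegrable (poissonKernelDisc r) volume a b :=
    fun a b => (kernel_cont hr0 hr1).intervalIntegrable a b
  have habs : ∀ a b : ℝ, IntervalIntegrable (fun s => |poissonKernelDisc r s * ψ s|) volume a b := by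
    intro a b
    refine intervalIntegrable_bdd ((kernel_cont hr0 hr1).measurable.mul hψm).abs
      (M := (1 - r ^ 2) / (1 - 2 * r * 1 + r ^ 2) * K) (fun t => ?_) a b
    rw [abs_abs, Pi.mul_apply, abs_mul]
    exact mul_le_mul (kernel_bdd hr0 hr1 t) (hK t) (abs_nonneg _)
      (le_trans (abs_nonneg _) (kernel_bdd hr0 hr1 0))
  have hintm := integrable_kernel_mul hr0 hr1 hψm hK
  have h1 : |∫ s in (0:ℝ)..π, poissonKernelDisc r s * ψ s| ≤
      ∫ s in (0:ℝ)..π, |poissonKernelDisc r s * ψ s| :=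
    intervalIntegral.abs_integral_le_integral_abs Real.pi_pos.le
  have hsplit := intervalIntegral.integral_add_adjacent_intervals (habs 0 δ₂) (habs δ₂ π)
  -- first piece
  have h2 : (∫ s in (0:ℝ)..δ₂, |poissonKernelDisc r s * ψ s|) ≤
      ∫ s in (0:ℝ)..δ₂, poissonKernelDisc r s * ε' := by
    apply intervalIntegral.integral_mono_ae_restrict hδ₂0.le (habs 0 δ₂)
      ((hPint 0 δ₂).mul_const ε')
    have h0 : ∀ᵐ s : ℝ ∂(volume.restrict (Icc (0:ℝ) δ₂)), s ≠ 0 := by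
      refine ae_restrict_of_ae ?_
      have he : {s : ℝ | ¬ s ≠ 0} = {0} := by ext s; simp
      rw [ae_iff, he]
      exact Real.volume_singleton
    filter_upwards [h0, ae_restrict_mem measurableSet_Icc] with s hs0 hsmem
    rw [abs_mul, abs_of_nonneg (kernel_nonneg hr0 hr1 s)]
    exact mul_le_mul_of_nonneg_left
      (hsmall s (lt_of_le_of_ne hsmem.1 (Ne.symm hs0)) hsmem.2) (kernel_nonneg hr0 hr1 s)
  have h3 : (∫ s in (0:ℝ)..δ₂, poissonKernelDisc r s * ε') ≤ ε' * π := by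
    rw [intervalIntegral.integral_mul_const]
    have : (∫ s in (0:ℝ)..δ₂, poissonKernelDisc r s) ≤ π := by
      rw [← int_halfpi hr0 hr1]
      apply intervalIntegral.integral_mono_interval le_rfl hδ₂0.le hδ₂π
        (ae_of_all _ fun s => kernel_nonneg hr0 hr1 s) (hPint 0 π)
    calc (∫ s in (0:ℝ)..δ₂, poissonKernelDisc r s) * ε' ≤ π * ε' :=
          mul_le_mul_of_nonneg_right this hε'0
      _ = ε' * π := mul_comm _ _
  -- second piece
  have h4 : (∫ s in δ₂..π, |poissonKernelDisc r s * ψ s|) ≤ ∫ s in δ₂..π, M * K := by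
    apply intervalIntegral.integral_mono_on hδ₂π (habs δ₂ π)
      (intervalIntegrable_const)
    intro s hs
    rw [abs_mul, abs_of_nonneg (kernel_nonneg hr0 hr1 s)]
    have hPle : poissonKernelDisc r s ≤ M :=
      kernel_le hr0 hr1 (Real.cos_le_one δ₂)
        (Real.cos_le_cos_of_nonneg_of_le_pi hδ₂0.le hs.2 hs.1)
    exact mul_le_mul hPle (hK s) (abs_nonneg _) hM0
  have h5 : (∫ s in δ₂..π, M * K) ≤ K * M * π := by
    rw [intervalIntegral.integral_const, smul_eq_mul]
    nlinarith [mul_nonneg hM0 hK0]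
  linarith

theorem stmt4 (φ : ℝ → ℝ) (C : ℝ)
    (hper : ∀ t : ℝ, φ (t + 2 * Real.pi) = φ t)
    (hbdd : ∀ t : ℝ, |φ t| ≤ C)
    (hmeas : Measurable φ)
    (θ₀ A B : ℝ)
    (hA : Filter.Tendsto φ (nhdsWithin θ₀ (Set.Iio θ₀)) (nhds A))
    (hB : Filter.Tendsto φ (nhdsWithin θ₀ (Set.Ioi θ₀)) (nhds B)) :
    Filter.Tendsto (fun r : ℝ => poissonIntegral φ r θ₀)
      (nhdsWithin 1 (Set.Iio 1)) (nhds ((A + B) / 2)) := by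
  have hpi := Real.pi_pos
  rw [Metric.tendsto_nhds]
  intro ε hε
  rw [Metric.tendsto_nhdsWithin_nhds] at hA hB
  obtain ⟨δA, hδA0, hA'⟩ := hA (ε/4) (by positivity)
  obtain ⟨δB, hδB0, hB'⟩ := hB (ε/4) (by positivity)
  set δ₂ : ℝ := min (min δA δB / 2) (π / 2) with hδ₂def
  have hδ₂0 : 0 < δ₂ := lt_min (by positivity) (by positivity)
  have hδ₂π : δ₂ ≤ π := le_trans (min_le_right _ _) (by linarith)
  have hδ₂A : δ₂ < δA := by
    have h1 : δ₂ ≤ min δA δB / 2 := min_le_left _ _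
    have h2 : min δA δB ≤ δA := min_le_left _ _
    linarith
  have hδ₂B : δ₂ < δB := by
    have h1 : δ₂ ≤ min δA δB / 2 := min_le_left _ _
    have h2 : min δA δB ≤ δB := min_le_right _ _
    linarith
  have hcos : Real.cos δ₂ < 1 := by
    have h := Real.cos_lt_cos_of_nonneg_of_le_pi (le_refl (0:ℝ)) hδ₂π hδ₂0
    rwa [Real.cos_zero] at h
  set KA := C + |A| with hKAdef
  set KB := C + |B| with hKBdef
  have hMlim : Tendsto (fun r : ℝ => (1 - r^2)/(1 - 2*r*Real.cos δ₂ + r^2))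
      (nhds 1) (nhds 0) := by
    have hden : Tendsto (fun r : ℝ => 1 - 2*r*Real.cos δ₂ + r^2) (nhds 1)
        (nhds (2 - 2*Real.cos δ₂)) := by
      have hc : Continuous fun r : ℝ => 1 - 2*r*Real.cos δ₂ + r^2 :=
        (continuous_const.sub ((continuous_const.mul continuous_id).mul
          continuous_const)).add (continuous_pow 2)
      convert hc.tendsto 1 using 2
      ring
    have hnum : Tendsto (fun r : ℝ => 1 - r^2) (nhds 1) (nhds 0) := by
      have hc : Continuous fun r : ℝ => 1 - r^2 := continuous_const.sub (continuous_pow 2)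
      have h := hc.tendsto 1
      norm_num at h
      exact h
    have := hnum.div hden (by nlinarith : (2 - 2*Real.cos δ₂) ≠ 0)
    simpa [Pi.div_def] using this
  have hKlim : Tendsto (fun r : ℝ => (KA + KB)/2 * ((1 - r^2)/(1 - 2*r*Real.cos δ₂ + r^2)))
      (nhds 1) (nhds 0) := by
    simpa using hMlim.const_mul ((KA + KB)/2)
  have hMev : ∀ᶠ r in nhdsWithin 1 (Iio 1),
      (KA + KB)/2 * ((1 - r^2)/(1 - 2*r*Real.cos δ₂ + r^2)) < ε/4 :=
    (hKlim.eventually (gt_mem_nhds (by positivity : (0:ℝ) < ε/4))).filter_mono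
      nhdsWithin_le_nhds
  have hr0ev : ∀ᶠ r in nhdsWithin 1 (Iio 1), (0:ℝ) < r :=
    (eventually_gt_nhds (by norm_num : (0:ℝ) < 1)).filter_mono nhdsWithin_le_nhds
  filter_upwards [hMev, hr0ev, eventually_mem_nhdsWithin] with r hMr hr0' hr1'
  have hr0 : (0:ℝ) ≤ r := hr0'.le
  have hr1 : r < 1 := hr1'
  set M := (1 - r^2)/(1 - 2*r*Real.cos δ₂ + r^2) with hMdef
  set ψA : ℝ → ℝ := fun s => φ (θ₀ - s) - A with hψAdef
  set ψB : ℝ → ℝ := fun s => φ (θ₀ + s) - B with hψBdef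
  have hmA : Measurable ψA :=
    (hmeas.comp (measurable_const.sub measurable_id)).sub measurable_const
  have hmB : Measurable ψB :=
    (hmeas.comp (measurable_const.add measurable_id)).sub measurable_const
  have hKA : ∀ s, |ψA s| ≤ KA := by
    intro s
    rw [hψAdef]
    simp only [sub_eq_add_neg]
    exact le_trans (abs_add_le _ _) (by rw [abs_neg]; exact add_le_add_left (hbdd _) _)
  have hKB : ∀ s, |ψB s| ≤ KB := by
    intro s
    rw [hψBdef]
    simp only [sub_eq_add_neg]
    exact le_trans (abs_add_le _ _) (by rw [abs_neg]; exact add_le_add_left (hbdd _) _)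
  have hsmallA : ∀ s, 0 < s → s ≤ δ₂ → |ψA s| ≤ ε/4 := by
    intro s hs1 hs2
    have hx : θ₀ - s ∈ Iio θ₀ := sub_lt_self θ₀ hs1
    have hd : dist (θ₀ - s) θ₀ < δA := by
      rw [Real.dist_eq, show θ₀ - s - θ₀ = -s by ring, abs_neg, abs_of_nonneg hs1.le]
      linarith
    have := hA' hx hd
    rw [Real.dist_eq] at this
    exact this.le
  have hsmallB : ∀ s, 0 < s → s ≤ δ₂ → |ψB s| ≤ ε/4 := by
    intro s hs1 hs2
    have hx : θ₀ + s ∈ Ioi θ₀ := lt_add_of_pos_right θ₀ hs1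
    have hd : dist (θ₀ + s) θ₀ < δB := by
      rw [Real.dist_eq, show θ₀ + s - θ₀ = s by ring, abs_of_nonneg hs1.le]
      linarith
    have := hB' hx hd
    rw [Real.dist_eq] at this
    exact this.le
  have hestA := core_estimate hr0 hr1 hmA hKA hδ₂0 hδ₂π hsmallA
  have hestB := core_estimate hr0 hr1 hmB hKB hδ₂0 hδ₂π hsmallB
  rw [← hMdef] at hestA hestB
  rw [Real.dist_eq, poissonIntegral_eq φ C hper hbdd hmeas θ₀ hr0 hr1]
  have hIA : (∫ s in (0:ℝ)..π, poissonKernelDisc r s * φ (θ₀ - s)) =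
      (∫ s in (0:ℝ)..π, poissonKernelDisc r s * ψA s) + A * π := by
    have e : ∀ s:ℝ, poissonKernelDisc r s * φ (θ₀ - s) =
        poissonKernelDisc r s * ψA s + A * poissonKernelDisc r s := fun s => by
      rw [hψAdef]; ring
    simp_rw [e]
    rw [intervalIntegral.integral_add (integrable_kernel_mul hr0 hr1 hmA hKA 0 π)
      (((kernel_cont hr0 hr1).intervalIntegrable 0 π).const_mul A),
      intervalIntegral.integral_const_mul, int_halfpi hr0 hr1]
  have hIB : (∫ s in (0:ℝ)..π, poissonKernelDisc r s * φ (θ₀ + s)) =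
      (∫ s in (0:ℝ)..π, poissonKernelDisc r s * ψB s) + B * π := by
    have e : ∀ s:ℝ, poissonKernelDisc r s * φ (θ₀ + s) =
        poissonKernelDisc r s * ψB s + B * poissonKernelDisc r s := fun s => by
      rw [hψBdef]; ring
    simp_rw [e]
    rw [intervalIntegral.integral_add (integrable_kernel_mul hr0 hr1 hmB hKB 0 π)
      (((kernel_cont hr0 hr1).intervalIntegrable 0 π).const_mul B),
      intervalIntegral.integral_const_mul, int_halfpi hr0 hr1]
  rw [hIA, hIB]
  set IA := ∫ s in (0:ℝ)..π, poissonKernelDisc r s * ψA s with hIAdef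
  set IB := ∫ s in (0:ℝ)..π, poissonKernelDisc r s * ψB s with hIBdef
  have heq : (1/(2*π)) * ((IA + A*π) + (IB + B*π)) - (A+B)/2 = (1/(2*π))*(IA + IB) := by
    field_simp
    ring
  rw [heq]
  have habs : |(1/(2*π))*(IA+IB)| = (1/(2*π))*|IA+IB| := by
    rw [abs_mul, abs_of_nonneg (by positivity : (0:ℝ) ≤ 1/(2*π))]
  calc |(1/(2*π))*(IA+IB)| = (1/(2*π))*|IA+IB| := habs
    _ ≤ (1/(2*π)) * (|IA| + |IB|) :=
        mul_le_mul_of_nonneg_left (abs_add_le _ _) (by positivity)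
    _ ≤ (1/(2*π)) * ((ε/4*π + KA*M*π) + (ε/4*π + KB*M*π)) :=
        mul_le_mul_of_nonneg_left (add_le_add hestA hestB) (by positivity)
    _ = ε/4 + (KA + KB)/2 * M := by field_simp; ring
    _ < ε/4 + ε/4 := by linarith
    _ < ε := by linarith
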